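/- Assume ‖W_i − A*_i‖ ≤ δ for all i, A* has unit-norm μ/√n-incoherent columns, x* is nonnegative with support S of size at most k and entries in [a,b], and i ∈ S. Set ε = 2m₁k(δ + μ/√n). If a ≥ (b + 2m₁)k(δ + μ/√n)/(1 − δ) and δ < 1, then ⟨W_i, A*x*⟩ − ε ≥ 0, i.e., the i-th ReLU unit with bias ε is active. -/

import Mathlib

open scoped RealInnerProductSpace

/-- with bias `ε = 2m₁k(δ + μ/√n)` and `a ≥ (b + 2m₁)k(δ + μ/√n)/(1 − δ)`,
the `i`-th ReLU unit is active for `i` in the support: `⟪Wᵢ, A*x*⟫ − ε ≥ 0`. -/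
theorem stmt_7 (n h : ℕ) (A : Fin h → EuclideanSpace ℝ (Fin n))
    (W : Fin h → EuclideanSpace ℝ (Fin n)) (μ δ a b m₁ : ℝ) (k : ℕ)
    (S : Finset (Fin h)) (x : Fin h → ℝ) (i : Fin h)
    (hnorm : ∀ l, ‖A l‖ = 1)
    (hincoh : ∀ l m : Fin h, l ≠ m → |⟪A l, A m⟫| ≤ μ / Real.sqrt n)
    (hW : ∀ l, ‖W l - A l‖ ≤ δ)
    (hδ : δ < 1) (hm₁ : 0 < m₁) (ha0 : 0 ≤ a)
    (hcard : S.card ≤ k)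
    (hx : ∀ j ∈ S, x j ∈ Set.Icc a b)
    (hsupp : ∀ j ∉ S, x j = 0)
    (hi : i ∈ S)
    (haLB : a ≥ (b + 2*m₁) * k * (δ + μ / Real.sqrt n) / (1 - δ)) :
    ⟪W i, ∑ j ∈ S, x j • A j⟫ - 2*m₁*k*(δ + μ / Real.sqrt n) ≥ 0 := by
  set c := δ + μ / Real.sqrt n with hc
  have hδ0 : 0 ≤ δ := le_trans (norm_nonneg _) (hW i)
  have h1δ : 0 < 1 - δ := by linarith
  have hax : a ≤ x i := (hx i hi).1
  have hab : a ≤ b := le_trans hax (hx i hi).2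
  have hWAi : ∀ j : Fin h, |⟪W i - A i, A j⟫| ≤ δ := by
    intro j
    calc |⟪W i - A i, A j⟫| ≤ ‖W i - A i‖ * ‖A j‖ := abs_real_inner_le_norm _ _
      _ ≤ δ * 1 := mul_le_mul (hW i) (le_of_eq (hnorm j)) (norm_nonneg _) hδ0
      _ = δ := mul_one δ
  have key1 : 1 - δ ≤ ⟪W i, A i⟫ := by
    have h3 : ⟪W i - A i, A i⟫ = ⟪W i, A i⟫ - ⟪A i, A i⟫ := inner_sub_left _ _ _
    have h4 : ⟪A i, A i⟫ = (1 : ℝ) := by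
      rw [real_inner_self_eq_norm_sq, hnorm i]; norm_num
    have h5 := (abs_le.1 (hWAi i)).1
    linarith
  have key2 : ∀ j : Fin h, j ≠ i → |⟪W i, A j⟫| ≤ c := by
    intro j hj
    have h3 : ⟪W i, A j⟫ = ⟪A i, A j⟫ + ⟪W i - A i, A j⟫ := by
      rw [inner_sub_left]; ring
    have h5 : |⟪A i, A j⟫| ≤ μ / Real.sqrt n := hincoh i j (Ne.symm hj)
    calc |⟪W i, A j⟫| ≤ |⟪A i, A j⟫| + |⟪W i - A i, A j⟫| := by
          rw [h3]; exact abs_add_le _ _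
      _ ≤ c := by rw [hc]; linarith [hWAi j]
  have hexp : ⟪W i, ∑ j ∈ S, x j • A j⟫ = ∑ j ∈ S, x j * ⟪W i, A j⟫ := by
    rw [inner_sum]
    exact Finset.sum_congr rfl fun j _ => real_inner_smul_right _ _ _
  have hsplit : ∑ j ∈ S, x j * ⟪W i, A j⟫
      = x i * ⟪W i, A i⟫ + ∑ j ∈ S.erase i, x j * ⟪W i, A j⟫ :=
    (Finset.add_sum_erase S _ hi).symm
  have hxiWA : a * (1 - δ) ≤ x i * ⟪W i, A i⟫ :=
    mul_le_mul hax key1 (le_of_lt h1δ) (le_trans ha0 hax)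
  by_cases hc0 : 0 ≤ c
  · have hbc : 0 ≤ b * c := mul_nonneg (le_trans ha0 hab) hc0
    have hsum2 : ∀ j ∈ S.erase i, -(b * c) ≤ x j * ⟪W i, A j⟫ := by
      intro j hj
      have hji : j ≠ i := Finset.ne_of_mem_erase hj
      have hjS : j ∈ S := Finset.mem_of_mem_erase hj
      have hxj := hx j hjS
      have hxj0 : 0 ≤ x j := le_trans ha0 hxj.1
      have h2 := (abs_le.1 (key2 j hji)).1
      nlinarith [mul_nonneg hxj0 (by linarith : (0:ℝ) ≤ ⟪W i, A j⟫ + c),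
        mul_nonneg (by linarith [hxj.2] : (0:ℝ) ≤ b - x j) hc0]
    have h7 : ∑ j ∈ S.erase i, (-(b * c)) ≤ ∑ j ∈ S.erase i, x j * ⟪W i, A j⟫ :=
      Finset.sum_le_sum hsum2
    have h8 : ∑ j ∈ S.erase i, (-(b * c)) = -(((S.erase i).card : ℝ) * (b * c)) := by
      rw [Finset.sum_const, nsmul_eq_mul]; ring
    have hcard' : ((S.erase i).card : ℝ) ≤ (k : ℝ) := by
      exact_mod_cast le_trans (Finset.card_erase_le) hcard
    have h9 : -((k : ℝ) * (b * c)) ≤ ∑ j ∈ S.erase i, x j * ⟪W i, A j⟫ := by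
      rw [h8] at h7
      nlinarith
    have haLB' : (b + 2 * m₁) * (k : ℝ) * c ≤ a * (1 - δ) := by
      rw [ge_iff_le, div_le_iff₀ h1δ] at haLB; linarith
    have hring : (b + 2 * m₁) * (k : ℝ) * c = (k : ℝ) * (b * c) + 2 * m₁ * (k : ℝ) * c := by
      ring
    rw [hexp, hsplit]
    linarith
  · push_neg at hc0
    have hS : S = {i} := by
      apply Finset.eq_singleton_iff_unique_mem.2 ⟨hi, ?_⟩
      intro j hj
      by_contra hji
      exact absurd (le_trans (abs_nonneg _) (key2 j hji)) (not_le.2 hc0)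
    have h2 : 2 * m₁ * (k : ℝ) * c ≤ 0 :=
      mul_nonpos_of_nonneg_of_nonpos
        (by positivity) (le_of_lt hc0)
    rw [hexp, hsplit, hS]
    simp only [Finset.erase_singleton, Finset.sum_empty, add_zero]
    nlinarith [mul_nonneg ha0 h1δ.le]
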